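/- Let K be a real symmetric positive semidefinite N×N matrix with all diagonal entries at most 1 and eigenvalues λ₁ ≥ … ≥ λ_N. Let j₁, …, j_m be independent indices, each uniformly distributed on {1,…,N}; set K̂ ∈ ℝ^{m×m} with K̂_{k,l} = K_{j_k, j_l} and K_b ∈ ℝ^{N×m} with (K_b)_{i,k} = K_{i, j_k}. Then for every δ ∈ (0,1) and every r with 1 ≤ r ≤ N−1 and λ_r > 0, with probability at least 1 − δ, ‖K − K_b K̂† K_b^⊤‖₂ ≤ 16 (ln(2/δ))² N² / (m λ_r) + λ_{r+1}. -/

import Mathlib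

open Matrix Finset
open scoped Matrix.Norms.L2Operator

/-- `P` is the Moore–Penrose pseudoinverse of `A`. -/
def IsMoorePenroseInv {n : Type*} [Fintype n] (A P : Matrix n n ℝ) : Prop :=
  A * P * A = A ∧ P * A * P = P ∧ (A * P)ᵀ = A * P ∧ (P * A)ᵀ = P * A


lemma step_mgf {N : ℕ} (hN : 0 < N) (t c : ℝ) (w : Fin N → ℝ)
    (hw : ∀ a b, w a - w b ≤ c) :
    ∑ x, Real.exp (t * (w x - (∑ y, w y) / N)) ≤ N * Real.exp (t^2*c^2/2) := by
  have hc : 0 ≤ c := by simpa using hw ⟨0, hN⟩ ⟨0, hN⟩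
  have hNR : (0:ℝ) < N := by exact_mod_cast hN
  set A : ℝ := (∑ y, w y) / N with hA
  have hAN : A * N = ∑ y, w y := by rw [hA]; field_simp
  have hsumd : ∑ x, (w x - A) = 0 := by
    rw [Finset.sum_sub_distrib, ← hAN]
    simp [Finset.sum_const, card_univ, mul_comm]
  have hd : ∀ x, |w x - A| ≤ c := by
    intro x
    have hup : (∑ y, (w x - w y)) ≤ N * c := by
      calc (∑ y, (w x - w y)) ≤ ∑ _y : Fin N, c := Finset.sum_le_sum (fun y _ => hw x y)
      _ = N * c := by simp [Finset.sum_const, card_univ, mul_comm]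
    have hlo : (∑ y, (w y - w x)) ≤ N * c := by
      calc (∑ y, (w y - w x)) ≤ ∑ _y : Fin N, c := Finset.sum_le_sum (fun y _ => hw y x)
      _ = N * c := by simp [Finset.sum_const, card_univ, mul_comm]
    have hsx : ∑ y, (w x - w y) = N * w x - A * N := by
      rw [Finset.sum_sub_distrib, hAN]
      simp [Finset.sum_const, card_univ, mul_comm]
    have hsy : ∑ y, (w y - w x) = A * N - N * w x := by
      rw [Finset.sum_sub_distrib, hAN]
      simp [Finset.sum_const, card_univ, mul_comm]
    rw [abs_le]
    constructor <;> nlinarith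
  rcases eq_or_lt_of_le hc with hc0 | hcpos
  · have hwx : ∀ x, Real.exp (t * (w x - A)) = 1 := by
      intro x
      have h := hd x
      rw [← hc0] at h
      have h0 : w x - A = 0 := abs_eq_zero.mp (le_antisymm h (abs_nonneg _))
      rw [h0]; simp
    rw [Finset.sum_congr rfl (fun x _ => hwx x)]
    simp only [Finset.sum_const, card_univ, Fintype.card_fin, nsmul_eq_mul, mul_one]
    have : (1:ℝ) ≤ Real.exp (t^2*c^2/2) := Real.one_le_exp (by positivity)
    nlinarith
  · have key : ∀ x, Real.exp (t * (w x - A)) ≤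
        ((c - (w x - A))/(2*c)) * Real.exp (-(t*c)) + ((c + (w x - A))/(2*c)) * Real.exp (t*c) := by
      intro x
      have hx1 := (abs_le.mp (hd x)).1
      have hx2 := (abs_le.mp (hd x)).2
      have h1 : 0 ≤ (c - (w x - A))/(2*c) := div_nonneg (by linarith) (by linarith)
      have h2 : 0 ≤ (c + (w x - A))/(2*c) := div_nonneg (by linarith) (by linarith)
      have h3 : (c - (w x - A))/(2*c) + (c + (w x - A))/(2*c) = 1 := by
        field_simp
        ring
      have hcv := convexOn_exp.2 (Set.mem_univ (-(t*c))) (Set.mem_univ (t*c)) h1 h2 h3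
      simp only [smul_eq_mul] at hcv
      have harg : (c - (w x - A))/(2*c) * (-(t*c)) + (c + (w x - A))/(2*c) * (t*c)
          = t * (w x - A) := by field_simp; ring
      rw [harg] at hcv
      exact hcv
    calc ∑ x, Real.exp (t * (w x - A))
        ≤ ∑ x, (((c - (w x - A))/(2*c)) * Real.exp (-(t*c)) + ((c + (w x - A))/(2*c)) * Real.exp (t*c)) :=
          Finset.sum_le_sum (fun x _ => key x)
      _ = N * ((Real.exp (-(t*c)) + Real.exp (t*c))/2) := by
          rw [Finset.sum_add_distrib, ← Finset.sum_mul, ← Finset.sum_mul]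
          have e1 : ∑ x, (c - (w x - A))/(2*c) = N / 2 := by
            rw [← Finset.sum_div, Finset.sum_sub_distrib, hsumd]
            simp [Finset.sum_const, card_univ]
            field_simp
          have e2 : ∑ x, (c + (w x - A))/(2*c) = N / 2 := by
            rw [← Finset.sum_div, Finset.sum_add_distrib, hsumd]
            simp [Finset.sum_const, card_univ]
            field_simp
          rw [e1, e2]; ring
      _ = N * Real.cosh (t*c) := by rw [Real.cosh_eq]; ring_nf
      _ ≤ N * Real.exp (t^2*c^2/2) := by
          have h := Real.cosh_le_exp_half_sq (t*c)
          have h2 : (t*c)^2/2 = t^2*c^2/2 := by ring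
          rw [h2] at h
          nlinarith


lemma mcdiarmid_mgf {N : ℕ} (hN : 0 < N) (t c : ℝ) :
    ∀ (n : ℕ) (φ : (Fin n → Fin N) → ℝ),
    (∀ (j : Fin n → Fin N) (k : Fin n) (x : Fin N), φ j - φ (Function.update j k x) ≤ c) →
    ∑ j, Real.exp (t * (φ j - (∑ j', φ j') / N^n)) ≤ (N:ℝ)^n * Real.exp (n * (t^2*c^2/2)) := by
  intro n
  induction n with
  | zero =>
    intro φ _
    have h1 : ∀ (f : (Fin 0 → Fin N) → ℝ), ∑ j, f j = f (fun i => i.elim0) := by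
      intro f
      apply Fintype.sum_unique
    rw [h1]
    rw [h1 φ]
    simp
  | succ n ih =>
    intro φ hφ
    have hNR : (0:ℝ) < N := by exact_mod_cast hN
    have hdecomp : ∀ (F : (Fin (n+1) → Fin N) → ℝ),
        ∑ j, F j = ∑ j' : Fin n → Fin N, ∑ x : Fin N, F (Fin.cons x j') := by
      intro F
      rw [← Equiv.sum_comp (Fin.consEquiv (fun _ => Fin N)) F, Fintype.sum_prod_type]
      rw [Finset.sum_comm]
      rfl
    set ψ : (Fin n → Fin N) → ℝ := fun j' => (∑ x : Fin N, φ (Fin.cons x j')) / N with hψ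
    set A : ℝ := (∑ j', φ j') / N^(n+1) with hA
    have hAψ : (∑ j', ψ j') / N^n = A := by
      rw [hA, hdecomp φ]
      rw [hψ]
      simp only
      rw [← Finset.sum_div]
      rw [div_div]
      ring_nf
    have hψbd : ∀ (j : Fin n → Fin N) (k : Fin n) (x : Fin N), ψ j - ψ (Function.update j k x) ≤ c := by
      intro j k x
      rw [hψ]
      simp only
      rw [div_sub_div_same, ← Finset.sum_sub_distrib]
      have hb : ∀ y : Fin N, φ (Fin.cons y j) - φ (Fin.cons y (Function.update j k x)) ≤ c := by
        intro y
        rw [Fin.cons_update]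
        exact hφ _ _ _
      rw [div_le_iff₀ hNR]
      exact (Finset.sum_le_sum fun y _ => hb y).trans (by simp [Finset.sum_const, card_univ, mul_comm])
    calc ∑ j, Real.exp (t * (φ j - A))
        = ∑ j' : Fin n → Fin N, ∑ x : Fin N,
            Real.exp (t * (φ (Fin.cons x j') - ψ j')) * Real.exp (t * (ψ j' - A)) := by
          rw [hdecomp (fun j => Real.exp (t * (φ j - A)))]
          apply Finset.sum_congr rfl
          intro j' _
          apply Finset.sum_congr rfl
          intro x _
          rw [← Real.exp_add]
          ring_nf
      _ = ∑ j' : Fin n → Fin N,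
            (∑ x : Fin N, Real.exp (t * (φ (Fin.cons x j') - ψ j'))) * Real.exp (t * (ψ j' - A)) := by
          apply Finset.sum_congr rfl
          intro j' _
          rw [Finset.sum_mul]
      _ ≤ ∑ j' : Fin n → Fin N,
            ((N:ℝ) * Real.exp (t^2*c^2/2)) * Real.exp (t * (ψ j' - A)) := by
          apply Finset.sum_le_sum
          intro j' _
          apply mul_le_mul_of_nonneg_right ?_ (Real.exp_nonneg _)
          have := step_mgf hN t c (fun x => φ (Fin.cons x j')) ?_
          · exact this
          · intro a b
            have h0 := hφ (Fin.cons a j') 0 b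
            rwa [Fin.update_cons_zero] at h0
      _ = ((N:ℝ) * Real.exp (t^2*c^2/2)) * ∑ j', Real.exp (t * (ψ j' - A)) := by
          rw [← Finset.mul_sum]
      _ ≤ ((N:ℝ) * Real.exp (t^2*c^2/2)) * ((N:ℝ)^n * Real.exp (n * (t^2*c^2/2))) := by
          apply mul_le_mul_of_nonneg_left ?_ (by positivity)
          have := ih ψ hψbd
          rw [hAψ] at this
          exact this
      _ = (N:ℝ)^(n+1) * Real.exp ((↑(n+1) : ℝ) * (t^2*c^2/2)) := by
          push_cast
          rw [pow_succ ((N:ℝ)) n, show ((n:ℝ)+1)*(t^2*c^2/2) = (t^2*c^2/2) + (n:ℝ)*(t^2*c^2/2) by ring,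
            Real.exp_add]
          ring


section Conc

variable {H : Type*} [NormedAddCommGroup H] [InnerProductSpace ℝ H]

lemma sum_sq_eq {N : ℕ} (g : Fin N → H) (hsum : ∑ i, g i = 0) :
    ∀ (n : ℕ), (∑ j : Fin n → Fin N, ‖∑ k, g (j k)‖^2) * N = n * (N:ℝ)^n * ∑ i, ‖g i‖^2 := by
  intro n
  induction n with
  | zero =>
    have h1 : ∀ (f : (Fin 0 → Fin N) → ℝ), ∑ j, f j = f (fun i => i.elim0) := fun f =>
      Fintype.sum_unique f
    rw [h1]
    simp
  | succ n ih =>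
    have hdecomp : ∀ (F : (Fin (n+1) → Fin N) → ℝ),
        ∑ j, F j = ∑ j' : Fin n → Fin N, ∑ x : Fin N, F (Fin.cons x j') := by
      intro F
      rw [← Equiv.sum_comp (Fin.consEquiv (fun _ => Fin N)) F, Fintype.sum_prod_type]
      rw [Finset.sum_comm]
      rfl
    rw [hdecomp (fun j => ‖∑ k, g (j k)‖^2)]
    have hterm : ∀ (j' : Fin n → Fin N) (x : Fin N),
        ‖∑ k : Fin (n+1), g (Fin.cons (α := fun _ => Fin N) x j' k)‖^2
          = ‖g x‖^2 + 2 * (inner ℝ (g x) (∑ k : Fin n, g (j' k)) : ℝ) + ‖∑ k : Fin n, g (j' k)‖^2 := by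
      intro j' x
      have hsplit : ∑ k : Fin (n+1), g (Fin.cons (α := fun _ => Fin N) x j' k) = g x + ∑ k : Fin n, g (j' k) := by
        rw [Fin.sum_univ_succ]
        simp
      rw [hsplit, norm_add_sq_real]
    calc (∑ j' : Fin n → Fin N, ∑ x : Fin N, ‖∑ k : Fin (n+1), g (Fin.cons (α := fun _ => Fin N) x j' k)‖^2) * N
        = (∑ j' : Fin n → Fin N, ∑ x : Fin N,
            (‖g x‖^2 + 2 * (inner ℝ (g x) (∑ k : Fin n, g (j' k)) : ℝ) + ‖∑ k : Fin n, g (j' k)‖^2)) * N := by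
          congr 1
          exact Finset.sum_congr rfl fun j' _ => Finset.sum_congr rfl fun x _ => hterm j' x
      _ = ((N:ℝ)^n * ∑ i, ‖g i‖^2 + 0 + N * ∑ j' : Fin n → Fin N, ‖∑ k : Fin n, g (j' k)‖^2) * N := by
          congr 2
          simp only [Finset.sum_add_distrib]
          congr 1
          · congr 1
            · rw [Finset.sum_const, card_univ]
              simp only [Fintype.card_pi, Fintype.card_fin, Finset.prod_const, card_univ,
                nsmul_eq_mul]
              push_cast
              ring
            · have hz : ∀ j' : Fin n → Fin N, ∑ x : Fin N, 2 * (inner ℝ (g x) (∑ k : Fin n, g (j' k)) : ℝ)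
                  = 0 := by
                intro j'
                rw [← Finset.mul_sum, ← sum_inner, hsum]
                simp
              rw [Finset.sum_congr rfl fun j' _ => hz j']
              simp
          · simp only [Finset.sum_const, card_univ, Fintype.card_fin, nsmul_eq_mul]
            rw [← Finset.mul_sum]
      _ = ((n:ℝ)+1) * (N:ℝ)^(n+1) * ∑ i, ‖g i‖^2 := by
          have hN' : ((N:ℝ)^n * ∑ i, ‖g i‖^2) * N = (N:ℝ)^(n+1) * ∑ i, ‖g i‖^2 := by
            rw [pow_succ]; ring
          nlinarith [ih]
          
      _ = (↑(n + 1)) * (N:ℝ)^(n+1) * ∑ i, ‖g i‖^2 := by push_cast; ring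
end Conc


section Conc
variable {H : Type*} [NormedAddCommGroup H] [InnerProductSpace ℝ H]

lemma conc_main {N m : ℕ} (hN : 0 < N) (hm : 0 < m)
    (g : Fin N → H) (hsum : ∑ i, g i = 0) (c σ2 : ℝ) (hcpos : 0 < c)
    (hc : ∀ a b : Fin N, ‖g a - g b‖ ≤ c) (hσ : ∑ i, ‖g i‖^2 ≤ (N:ℝ) * σ2) (hσ2 : 0 ≤ σ2)
    (s : ℝ) (hs : 0 < s) :
    ((Finset.univ.filter
        (fun j : Fin m → Fin N => Real.sqrt (m * σ2) + s < ‖∑ k, g (j k)‖)).card : ℝ)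
      ≤ (N:ℝ)^m * Real.exp (-(s^2/(2 * m * c^2))) := by
  classical
  have hNR : (0:ℝ) < N := by exact_mod_cast hN
  have hmR : (0:ℝ) < m := by exact_mod_cast hm
  set φ : (Fin m → Fin N) → ℝ := fun j => ‖∑ k, g (j k)‖ with hφdef
  -- bounded differences
  have hbd : ∀ (j : Fin m → Fin N) (k : Fin m) (x : Fin N), φ j - φ (Function.update j k x) ≤ c := by
    intro j k x
    have hdiff : (∑ l, g (j l)) - (∑ l, g (Function.update j k x l)) = g (j k) - g x := by
      have h1 : (fun l => g (Function.update j k x l)) = Function.update (fun l => g (j l)) k (g x) := by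
        funext l
        by_cases hl : l = k
        · subst hl; simp
        · simp [Function.update_of_ne hl]
      rw [h1]
      rw [Finset.sum_update_of_mem (Finset.mem_univ k)]
      rw [← Finset.add_sum_erase _ _ (Finset.mem_univ k)]
      have : Finset.univ.erase k = Finset.univ \ {k} := by
        ext; simp [and_comm]
      rw [this]
      abel
    calc φ j - φ (Function.update j k x)
        ≤ ‖(∑ l, g (j l)) - (∑ l, g (Function.update j k x l))‖ := norm_sub_norm_le _ _
      _ = ‖g (j k) - g x‖ := by rw [hdiff]
      _ ≤ c := hc _ _
  -- mean bound
  set Abar : ℝ := (∑ j', φ j') / N^m with hAbar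
  have hAbar_nonneg : 0 ≤ Abar := by
    apply div_nonneg ?_ (by positivity)
    exact Finset.sum_nonneg fun j _ => norm_nonneg _
  have hAbar_le : Abar ≤ Real.sqrt (m * σ2) := by
    have hCS : (∑ j', φ j')^2 ≤ (N:ℝ)^m * ∑ j', φ j'^2 := by
      have := sq_sum_le_card_mul_sum_sq (s := (Finset.univ : Finset (Fin m → Fin N)))
        (f := φ)
      simpa [card_univ, Fintype.card_pi] using this
    have hsq : (∑ j' : Fin m → Fin N, φ j'^2) * N = m * (N:ℝ)^m * ∑ i, ‖g i‖^2 :=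
      sum_sq_eq g hsum m
    have hsum_sq_le : ∑ j' : Fin m → Fin N, φ j'^2 ≤ (m:ℝ) * (N:ℝ)^m * σ2 := by
      have h2 : (∑ j' : Fin m → Fin N, φ j'^2) * N ≤ m * (N:ℝ)^m * ((N:ℝ) * σ2) := by
        rw [hsq]
        apply mul_le_mul_of_nonneg_left hσ (by positivity)
      have h3 : (m:ℝ) * (N:ℝ)^m * ((N:ℝ) * σ2) = ((m:ℝ) * (N:ℝ)^m * σ2) * N := by ring
      rw [h3] at h2
      exact le_of_mul_le_mul_right h2 hNR
    have hA2 : Abar^2 ≤ (m:ℝ) * σ2 := by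
      rw [hAbar, div_pow]
      rw [div_le_iff₀ (by positivity)]
      calc (∑ j', φ j')^2 ≤ (N:ℝ)^m * ∑ j', φ j'^2 := hCS
        _ ≤ (N:ℝ)^m * ((m:ℝ) * (N:ℝ)^m * σ2) := by
            apply mul_le_mul_of_nonneg_left hsum_sq_le (by positivity)
        _ = (m:ℝ) * σ2 * ((N:ℝ)^m)^2 := by ring
    calc Abar = Real.sqrt (Abar^2) := (Real.sqrt_sq hAbar_nonneg).symm
      _ ≤ Real.sqrt ((m:ℝ) * σ2) := Real.sqrt_le_sqrt hA2
  -- Chernoff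
  set t : ℝ := s / (m * c^2) with ht
  have htpos : 0 < t := by positivity
  have hmgf := mcdiarmid_mgf hN t c m φ hbd
  rw [← hAbar] at hmgf
  set B := Finset.univ.filter (fun j : Fin m → Fin N => Real.sqrt (m * σ2) + s < φ j) with hB
  have hcount : ((B.card : ℝ)) * Real.exp (t * s) ≤ ∑ j, Real.exp (t * (φ j - Abar)) := by
    calc ((B.card : ℝ)) * Real.exp (t * s) = ∑ _j ∈ B, Real.exp (t * s) := by
          rw [Finset.sum_const, nsmul_eq_mul]
      _ ≤ ∑ j ∈ B, Real.exp (t * (φ j - Abar)) := by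
          apply Finset.sum_le_sum
          intro j hj
          apply Real.exp_le_exp.mpr
          have hj' : Real.sqrt (m * σ2) + s < φ j := (Finset.mem_filter.mp hj).2
          have : s ≤ φ j - Abar := by linarith [hAbar_le]
          exact mul_le_mul_of_nonneg_left this (le_of_lt htpos)
      _ ≤ ∑ j, Real.exp (t * (φ j - Abar)) := by
          apply Finset.sum_le_sum_of_subset_of_nonneg (Finset.filter_subset _ _)
          intro j _ _
          exact Real.exp_nonneg _
  have h1 : ((B.card : ℝ)) * Real.exp (t * s) ≤ (N:ℝ)^m * Real.exp (m * (t^2*c^2/2)) :=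
    hcount.trans hmgf
  have key : (m:ℝ) * (t^2*c^2/2) + -(t*s) = -(s^2/(2 * m * c^2)) := by
    rw [ht]
    field_simp
    ring
  calc ((B.card : ℝ)) = ((B.card : ℝ) * Real.exp (t*s)) * Real.exp (-(t*s)) := by
        rw [mul_assoc, ← Real.exp_add]
        simp
    _ ≤ ((N:ℝ)^m * Real.exp (m * (t^2*c^2/2))) * Real.exp (-(t*s)) :=
        mul_le_mul_of_nonneg_right h1 (Real.exp_nonneg _)
    _ = (N:ℝ)^m * Real.exp (-(s^2/(2 * m * c^2))) := by
        rw [mul_assoc, ← Real.exp_add, key]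
end Conc




lemma mp_unique {n : Type*} [Fintype n] {A P Q : Matrix n n ℝ}
    (hP : IsMoorePenroseInv A P) (hQ : IsMoorePenroseInv A Q) : P = Q := by
  obtain ⟨hP1, hP2, hP3, hP4⟩ := hP
  obtain ⟨hQ1, hQ2, hQ3, hQ4⟩ := hQ
  have hPeq : P = Q * A * P := by
    calc P = P * A * P := hP2.symm
      _ = P * (A * Q * A) * P := by rw [hQ1]
      _ = ((P * A) * (Q * A)) * P := by noncomm_ring
      _ = ((P * A)ᵀ * (Q * A)ᵀ) * P := by rw [hP4, hQ4]
      _ = ((Q * A) * (P * A))ᵀ * P := by rw [transpose_mul (Q * A) (P * A)]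
      _ = (Q * (A * P * A))ᵀ * P := by noncomm_ring
      _ = (Q * A)ᵀ * P := by rw [hP1]
      _ = Q * A * P := by rw [hQ4]
  have hQeq : Q = Q * A * P := by
    calc Q = Q * A * Q := hQ2.symm
      _ = Q * (A * P * A) * Q := by rw [hP1]
      _ = Q * ((A * P) * (A * Q)) := by noncomm_ring
      _ = Q * ((A * P)ᵀ * (A * Q)ᵀ) := by rw [hP3, hQ3]
      _ = Q * ((A * Q) * (A * P))ᵀ := by rw [transpose_mul (A * Q) (A * P)]
      _ = Q * ((A * Q * A) * P)ᵀ := by noncomm_ring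
      _ = Q * (A * P)ᵀ := by rw [hQ1]
      _ = Q * A * P := by rw [hP3]; noncomm_ring
  rw [hPeq, ← hQeq]

set_option maxHeartbeats 1000000 in
lemma mp_transpose_self {n : Type*} [Fintype n] {A P : Matrix n n ℝ}
    (hA : Aᵀ = A) (hP : IsMoorePenroseInv A P) : Pᵀ = P := by
  obtain ⟨h1, h2, h3, h4⟩ := hP
  have hPT : IsMoorePenroseInv A Pᵀ := by
    refine ⟨?_, ?_, ?_, ?_⟩
    · have e : (A * P * A)ᵀ = A * Pᵀ * A := by
        rw [transpose_mul (A * P) A, transpose_mul A P, hA]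
        noncomm_ring
      rw [← e, h1, hA]
    · have e : (P * A * P)ᵀ = Pᵀ * A * Pᵀ := by
        rw [transpose_mul (P * A) P, transpose_mul P A, hA]
        noncomm_ring
      rw [← e, h2]
    · calc (A * Pᵀ)ᵀ = P * Aᵀ := by rw [transpose_mul, transpose_transpose]
        _ = P * A := by rw [hA]
        _ = (P * A)ᵀ := h4.symm
        _ = Aᵀ * Pᵀ := by rw [transpose_mul]
        _ = A * Pᵀ := by rw [hA]
    · calc (Pᵀ * A)ᵀ = Aᵀ * P := by rw [transpose_mul, transpose_transpose]
        _ = A * P := by rw [hA]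
        _ = (A * P)ᵀ := h3.symm
        _ = Pᵀ * Aᵀ := by rw [transpose_mul]
        _ = Pᵀ * A := by rw [hA]
  exact mp_unique hPT ⟨h1, h2, h3, h4⟩




lemma dp_symm {N M : ℕ} (B : Matrix (Fin N) (Fin M) ℝ) (v : Fin N → ℝ) (w : Fin M → ℝ) :
    (Bᵀ *ᵥ v) ⬝ᵥ w = v ⬝ᵥ (B *ᵥ w) := by
  rw [dotProduct_comm, dotProduct_mulVec, vecMul_transpose, dotProduct_comm]

section Proj
variable {N m : ℕ} (A : Matrix (Fin N) (Fin m) ℝ) (P : Matrix (Fin m) (Fin m) ℝ)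

lemma proj_facts (hmp : IsMoorePenroseInv (Aᵀ * A) P) (hPsym : Pᵀ = P) :
    (A * P * Aᵀ)ᵀ = A * P * Aᵀ ∧ (A * P * Aᵀ) * (A * P * Aᵀ) = A * P * Aᵀ ∧
      (A * P * Aᵀ) * A = A := by
  obtain ⟨h1, h2, h3, h4⟩ := hmp
  have h1' : Aᵀ * (A * (P * (Aᵀ * A))) = Aᵀ * A := by
    have := h1
    simp only [Matrix.mul_assoc] at this
    exact this
  have hkey : A * (P * (Aᵀ * A)) - A = 0 := by
    have hM : (A * (P * (Aᵀ * A)) - A)ᵀ * (A * (P * (Aᵀ * A)) - A) = 0 := by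
      simp only [transpose_sub, transpose_mul, transpose_transpose, hPsym,
        Matrix.sub_mul, Matrix.mul_sub, Matrix.mul_assoc]
      simp only [h1']
      abel
    have := Matrix.conjTranspose_mul_self_eq_zero
      (A := (A * (P * (Aᵀ * A)) - A)).mp ?_
    · exact this
    · rw [Matrix.conjTranspose_eq_transpose_of_trivial]
      exact hM
  have hkey' : A * (P * (Aᵀ * A)) = A := sub_eq_zero.mp hkey
  have hPoA : (A * P * Aᵀ) * A = A := by
    simp only [Matrix.mul_assoc]
    simp only [← Matrix.mul_assoc A P (Aᵀ * A)] at hkey'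
    simp only [Matrix.mul_assoc] at hkey'
    exact hkey'
  refine ⟨?_, ?_, hPoA⟩
  · rw [transpose_mul, transpose_mul, transpose_transpose, hPsym, Matrix.mul_assoc]
  · have h2' : P * ((Aᵀ * A) * P) = P := by
      have := h2
      simp only [Matrix.mul_assoc] at this ⊢
      exact this
    calc (A * P * Aᵀ) * (A * P * Aᵀ) = A * (P * (Aᵀ * (A * (P * Aᵀ)))) := by
          simp only [Matrix.mul_assoc]
      _ = A * ((P * ((Aᵀ * A) * P)) * Aᵀ) := by simp only [Matrix.mul_assoc]
      _ = A * (P * Aᵀ) := by rw [h2']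
      _ = A * P * Aᵀ := by rw [Matrix.mul_assoc]
end Proj




set_option maxHeartbeats 1600000 in
lemma det_bound {N m : ℕ} (hN : 0 < N) (hm : 0 < m)
    (lam : Fin N → ℝ) (lam_nonneg : ∀ a, 0 ≤ lam a)
    (X : Matrix (Fin N) (Fin N) ℝ) (hXXt : X * Xᵀ = Matrix.diagonal lam)
    (j : Fin m → Fin N) (P : Matrix (Fin m) (Fin m) ℝ)
    (hmp : IsMoorePenroseInv ((X.submatrix id j)ᵀ * X.submatrix id j) P)
    (p q : Fin N) (hp : 0 < lam p) (hq : 0 ≤ lam q)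
    (hsplit : ∀ a : Fin N, lam p ≤ lam a ∨ lam a ≤ lam q)
    (Sq : ℝ)
    (hSq : ∑ a, ∑ b, ((Matrix.diagonal lam
        - ((N:ℝ)/m) • (X.submatrix id j * (X.submatrix id j)ᵀ)) a b)^2 ≤ Sq) :
    ‖Xᵀ * X - (Xᵀ * X).submatrix id j * P * ((Xᵀ * X).submatrix id j)ᵀ‖
      ≤ Sq / lam p + lam q := by
  classical
  set A := X.submatrix id j with hA
  have hHsym : ((Aᵀ * A))ᵀ = Aᵀ * A := by rw [transpose_mul, transpose_transpose]
  have hPsym : Pᵀ = P := mp_transpose_self hHsym hmp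
  obtain ⟨hPoT, hPoI, hPoA⟩ := proj_facts A P hmp hPsym
  set Po := A * P * Aᵀ with hPo
  clear_value Po
  set Q := (1 : Matrix (Fin N) (Fin N) ℝ) - Po with hQ
  clear_value Q
  have hQT : Qᵀ = Q := by rw [hQ, transpose_sub, transpose_one, hPoT]
  have hQI : Q * Q = Q := by
    rw [hQ, Matrix.sub_mul, Matrix.mul_sub, Matrix.mul_sub, hPoI]
    simp only [Matrix.one_mul, Matrix.mul_one]
    abel
  have hQA : Q * A = 0 := by
    rw [hQ, Matrix.sub_mul, Matrix.one_mul, hPoA, sub_self]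
  have hsub_col : (Xᵀ * X).submatrix id j = Xᵀ * A := by
    ext a k
    simp [Matrix.mul_apply, Matrix.submatrix_apply, hA]
  -- the residual as (QX)ᵀ(QX)
  have hR : Xᵀ * X - (Xᵀ * X).submatrix id j * P * ((Xᵀ * X).submatrix id j)ᵀ
      = (Q * X)ᵀ * (Q * X) := by
    rw [hsub_col, transpose_mul, transpose_transpose, transpose_mul, hQT]
    calc Xᵀ * X - Xᵀ * A * P * (Aᵀ * X)
        = Xᵀ * ((1 - A * P * Aᵀ) * X) := by
          rw [Matrix.sub_mul, Matrix.one_mul, Matrix.mul_sub]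
          simp only [Matrix.mul_assoc]
      _ = Xᵀ * (Q * X) := by rw [← hPo, ← hQ]
      _ = Xᵀ * ((Q * Q) * X) := by rw [hQI]
      _ = Xᵀ * Q * (Q * X) := by simp only [Matrix.mul_assoc]
  set C := Matrix.diagonal lam with hC
  set M := Q * C * Q with hM
  clear_value M
  have hMeq : (Q * X) * (Q * X)ᵀ = M := by
    have h0 : Q * X * (Q * X)ᵀ = Q * (X * Xᵀ) * Q := by
      rw [transpose_mul, hQT]
      simp only [Matrix.mul_assoc]
    rw [h0, hXXt, hM]
  -- norm equalities
  have hnormR : ‖(Q * X)ᵀ * (Q * X)‖ = ‖M‖ := by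
    have e1 : ((Q * X)ᴴ : Matrix (Fin N) (Fin N) ℝ) = (Q * X)ᵀ :=
      Matrix.conjTranspose_eq_transpose_of_trivial _
    have h1 : ‖(Q * X)ᴴ * (Q * X)‖ = ‖Q * X‖ * ‖Q * X‖ :=
      Matrix.l2_opNorm_conjTranspose_mul_self _
    have h2 : ‖((Q * X)ᴴ)ᴴ * ((Q * X)ᴴ)‖ = ‖(Q * X)ᴴ‖ * ‖(Q * X)ᴴ‖ :=
      Matrix.l2_opNorm_conjTranspose_mul_self _
    have h3 : ‖(Q * X)ᴴ‖ = ‖Q * X‖ := Matrix.l2_opNorm_conjTranspose _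
    rw [Matrix.conjTranspose_conjTranspose] at h2
    rw [e1] at h1 h2 h3
    rw [← hMeq, h1, h2, h3]
  -- quadratic form bound
  set Chat := ((N:ℝ)/m) • (A * Aᵀ) with hChat
  set E := C - Chat with hE
  have hSq0 : 0 ≤ Sq := le_trans (by positivity) hSq
  set β := Sq / lam p + lam q with hβ
  have hβ0 : 0 ≤ β := by
    rw [hβ]
    have : 0 ≤ Sq / lam p := div_nonneg hSq0 (le_of_lt hp)
    linarith
  have hChatQ : Chat * Q = 0 := by
    have hAtQ : Aᵀ * Q = 0 := by
      have : (Q * A)ᵀ = 0 := by rw [hQA, transpose_zero]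
      rw [transpose_mul, hQT] at this
      exact this
    rw [hChat, Matrix.smul_mul, Matrix.mul_assoc, hAtQ, Matrix.mul_zero, smul_zero]
  have hqf : ∀ v : Fin N → ℝ,
      v ⬝ᵥ (M *ᵥ v) ≤ β * (v ⬝ᵥ v) ∧ 0 ≤ v ⬝ᵥ (M *ᵥ v) := by
    intro v
    set w := Q *ᵥ v with hw
    have hvMv : v ⬝ᵥ (M *ᵥ v) = w ⬝ᵥ (C *ᵥ w) := by
      rw [hM]
      rw [show (Q * C * Q) *ᵥ v = Q *ᵥ (C *ᵥ (Q *ᵥ v)) by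
        rw [← Matrix.mulVec_mulVec, ← Matrix.mulVec_mulVec]]
      rw [← dp_symm Q v (C *ᵥ (Q *ᵥ v))]
      rw [hQT, ← hw]
    have hCw : C *ᵥ w = E *ᵥ w := by
      have h0 : Chat *ᵥ w = 0 := by
        rw [hw, Matrix.mulVec_mulVec, hChatQ, Matrix.zero_mulVec]
      rw [hE, Matrix.sub_mulVec, h0, sub_zero]
    have hwnorm : w ⬝ᵥ w ≤ v ⬝ᵥ v := by
      have h1 : w ⬝ᵥ w = v ⬝ᵥ (Q *ᵥ v) := by
        rw [hw]
        have h0 := dp_symm Q v (Q *ᵥ v)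
        rw [hQT] at h0
        rw [h0, Matrix.mulVec_mulVec, hQI]
      have h2 : v ⬝ᵥ (Po *ᵥ v) = (Po *ᵥ v) ⬝ᵥ (Po *ᵥ v) := by
        have h0 := dp_symm Po v (Po *ᵥ v)
        rw [hPoT] at h0
        rw [h0, Matrix.mulVec_mulVec, hPoI]
      have h3 : 0 ≤ v ⬝ᵥ (Po *ᵥ v) := by
        rw [h2]
        exact Finset.sum_nonneg fun i _ => mul_self_nonneg _
      have h4 : Q *ᵥ v = v - Po *ᵥ v := by
        rw [hQ, Matrix.sub_mulVec, Matrix.one_mulVec]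
      rw [h1, h4, dotProduct_sub]
      have : v ⬝ᵥ v - v ⬝ᵥ (Po *ᵥ v) ≤ v ⬝ᵥ v := by linarith
      exact this
    have hquad : w ⬝ᵥ (C *ᵥ w) = ∑ a, lam a * (w a)^2 := by
      rw [hC, dotProduct]
      apply Finset.sum_congr rfl
      intro a _
      rw [Matrix.mulVec_diagonal]
      ring
    have hterm : ∀ a, lam a * (w a)^2 ≤ ((E *ᵥ w) a)^2 / lam p + lam q * (w a)^2 := by
      intro a
      rcases hsplit a with hcase | hcase
      · have hlam_pos : 0 < lam a := lt_of_lt_of_le hp hcase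
        have heq : lam a * w a = (E *ᵥ w) a := by
          have : (C *ᵥ w) a = (E *ᵥ w) a := by rw [hCw]
          rw [← this, hC, Matrix.mulVec_diagonal]
        have h5 : lam a * (w a)^2 = ((E *ᵥ w) a)^2 / lam a := by
          rw [← heq]
          field_simp
        rw [h5]
        have h6 : ((E *ᵥ w) a)^2 / lam a ≤ ((E *ᵥ w) a)^2 / lam p :=
          div_le_div_of_nonneg_left (sq_nonneg _) hp hcase
        have h7 : 0 ≤ lam q * (w a)^2 := mul_nonneg hq (sq_nonneg _)
        linarith
      · have h6 : lam a * (w a)^2 ≤ lam q * (w a)^2 :=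
          mul_le_mul_of_nonneg_right hcase (sq_nonneg _)
        have h7 : 0 ≤ ((E *ᵥ w) a)^2 / lam p := div_nonneg (sq_nonneg _) (le_of_lt hp)
        linarith
    have hEsum : ∑ a, ((E *ᵥ w) a)^2 ≤ Sq * (w ⬝ᵥ w) := by
      have hrow : ∀ a, ((E *ᵥ w) a)^2 ≤ (∑ b, (E a b)^2) * (w ⬝ᵥ w) := by
        intro a
        have := Finset.sum_mul_sq_le_sq_mul_sq Finset.univ (fun b => E a b) w
        calc ((E *ᵥ w) a)^2 = (∑ b, E a b * w b)^2 := by rw [Matrix.mulVec, dotProduct]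
          _ ≤ (∑ b, (E a b)^2) * (∑ b, (w b)^2) := by
              simpa using this
          _ = (∑ b, (E a b)^2) * (w ⬝ᵥ w) := by
              congr 1
              rw [dotProduct]
              exact Finset.sum_congr rfl fun b _ => (sq (w b)).symm ▸ by ring
      calc ∑ a, ((E *ᵥ w) a)^2 ≤ ∑ a, (∑ b, (E a b)^2) * (w ⬝ᵥ w) :=
            Finset.sum_le_sum fun a _ => hrow a
        _ = (∑ a, ∑ b, (E a b)^2) * (w ⬝ᵥ w) := by rw [Finset.sum_mul]
        _ ≤ Sq * (w ⬝ᵥ w) := by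
            apply mul_le_mul_of_nonneg_right ?_ (Finset.sum_nonneg fun i _ => mul_self_nonneg _)
            exact hSq
    have hww : 0 ≤ w ⬝ᵥ w := Finset.sum_nonneg fun i _ => mul_self_nonneg _
    constructor
    · calc v ⬝ᵥ (M *ᵥ v) = ∑ a, lam a * (w a)^2 := by rw [hvMv, hquad]
        _ ≤ ∑ a, (((E *ᵥ w) a)^2 / lam p + lam q * (w a)^2) :=
            Finset.sum_le_sum fun a _ => hterm a
        _ = (∑ a, ((E *ᵥ w) a)^2) / lam p + lam q * (∑ a, (w a)^2) := by
            rw [Finset.sum_add_distrib, Finset.sum_div, Finset.mul_sum]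
        _ ≤ (Sq * (w ⬝ᵥ w)) / lam p + lam q * (w ⬝ᵥ w) := by
            have h8 : (∑ a, ((E *ᵥ w) a)^2) / lam p ≤ (Sq * (w ⬝ᵥ w)) / lam p := by
              gcongr
            have h9 : (∑ a, (w a)^2) = w ⬝ᵥ w := by
              rw [dotProduct]
              exact Finset.sum_congr rfl fun b _ => by ring
            rw [h9]
            linarith
        _ = β * (w ⬝ᵥ w) := by rw [hβ]; ring
        _ ≤ β * (v ⬝ᵥ v) := mul_le_mul_of_nonneg_left hwnorm hβ0
    · rw [hvMv, hquad]
      exact Finset.sum_nonneg fun a _ => mul_nonneg (lam_nonneg a) (sq_nonneg _)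
  -- symmetry of M
  have hMsym : Mᵀ = M := by
    rw [hM, transpose_mul, transpose_mul, hQT, Matrix.diagonal_transpose, Matrix.mul_assoc]
  have hdpsymM : ∀ u v : Fin N → ℝ, u ⬝ᵥ (M *ᵥ v) = v ⬝ᵥ (M *ᵥ u) := by
    intro u v
    calc u ⬝ᵥ (M *ᵥ v) = (Mᵀ *ᵥ u) ⬝ᵥ v := by rw [dp_symm]
      _ = (M *ᵥ u) ⬝ᵥ v := by rw [hMsym]
      _ = v ⬝ᵥ (M *ᵥ u) := dotProduct_comm _ _
  -- Cauchy-Schwarz for the PSD form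
  have hCS : ∀ u v : Fin N → ℝ, (u ⬝ᵥ (M *ᵥ v))^2 ≤ (u ⬝ᵥ (M *ᵥ u)) * (v ⬝ᵥ (M *ᵥ v)) := by
    intro u v
    have hpoly : ∀ t : ℝ, 0 ≤ (v ⬝ᵥ (M *ᵥ v)) * (t * t) + (2 * (u ⬝ᵥ (M *ᵥ v))) * t
        + (u ⬝ᵥ (M *ᵥ u)) := by
      intro t
      have h0 := (hqf (u + t • v)).2
      have hexp : (u + t • v) ⬝ᵥ (M *ᵥ (u + t • v))
          = (v ⬝ᵥ (M *ᵥ v)) * (t * t) + (2 * (u ⬝ᵥ (M *ᵥ v))) * t + (u ⬝ᵥ (M *ᵥ u)) := by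
        simp only [Matrix.mulVec_add, Matrix.mulVec_smul, add_dotProduct, dotProduct_add,
          smul_dotProduct, dotProduct_smul, smul_eq_mul]
        rw [hdpsymM v u]
        ring
      rw [hexp] at h0
      exact h0
    have hdisc := discrim_le_zero hpoly
    rw [discrim] at hdisc
    nlinarith [hdisc]
  -- operator norm bound for M
  have hMv_bound : ∀ v : Fin N → ℝ, (M *ᵥ v) ⬝ᵥ (M *ᵥ v) ≤ β^2 * (v ⬝ᵥ v) := by
    intro v
    set u := M *ᵥ v with hu
    have h1 : u ⬝ᵥ (M *ᵥ v) = u ⬝ᵥ u := by rw [hu]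
    have h2 := hCS u v
    rw [h1] at h2
    have h3 : u ⬝ᵥ (M *ᵥ u) ≤ β * (u ⬝ᵥ u) := (hqf u).1
    have h4 : v ⬝ᵥ (M *ᵥ v) ≤ β * (v ⬝ᵥ v) := (hqf v).1
    have huu : 0 ≤ u ⬝ᵥ u := Finset.sum_nonneg fun i _ => mul_self_nonneg _
    have hvv : 0 ≤ v ⬝ᵥ v := Finset.sum_nonneg fun i _ => mul_self_nonneg _
    rcases eq_or_lt_of_le huu with h0 | h0
    · rw [← h0]
      positivity
    · have h5 : (u ⬝ᵥ u)^2 ≤ (β * (u ⬝ᵥ u)) * (β * (v ⬝ᵥ v)) := by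
        have h6 : u ⬝ᵥ (M *ᵥ u) * (v ⬝ᵥ (M *ᵥ v)) ≤ (β * (u ⬝ᵥ u)) * (β * (v ⬝ᵥ v)) := by
          apply mul_le_mul h3 h4 (hqf v).2
          positivity
        exact le_trans h2 h6
      nlinarith
  -- conclude
  rw [hR, hnormR]
  rw [Matrix.l2_opNorm_def]
  apply ContinuousLinearMap.opNorm_le_bound _ hβ0
  intro x
  have hmain : ‖(EuclideanSpace.equiv (Fin N) ℝ).symm (M *ᵥ x)‖ ≤ β * ‖x‖ := by
    have hnorm_y : ‖(EuclideanSpace.equiv (Fin N) ℝ).symm (M *ᵥ x)‖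
        = Real.sqrt ((M *ᵥ x) ⬝ᵥ (M *ᵥ x)) := by
      rw [EuclideanSpace.norm_eq]
      congr 1
      rw [dotProduct]
      apply Finset.sum_congr rfl
      intro i _
      simp [Real.norm_eq_abs, sq_abs, pow_two]
    have hnorm_x : ‖x‖ = Real.sqrt ((x : Fin N → ℝ) ⬝ᵥ (x : Fin N → ℝ)) := by
      rw [EuclideanSpace.norm_eq]
      congr 1
      rw [dotProduct]
      apply Finset.sum_congr rfl
      intro i _
      simp [Real.norm_eq_abs, sq_abs, pow_two]
    rw [hnorm_y, hnorm_x]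
    rw [show β * Real.sqrt ((x : Fin N → ℝ) ⬝ᵥ (x : Fin N → ℝ))
        = Real.sqrt (β^2 * ((x : Fin N → ℝ) ⬝ᵥ (x : Fin N → ℝ))) by
      rw [Real.sqrt_mul (sq_nonneg β), Real.sqrt_sq hβ0]]
    exact Real.sqrt_le_sqrt (hMv_bound x)
  simpa [Matrix.toEuclideanLin_apply] using hmain






lemma sum_pair_sq {N : ℕ} (u v : Fin N → ℝ) (n : ℝ) :
    ∑ p, ∑ q, (n*(u p*u q) - n*(v p*v q))^2
      = n^2*((∑ p, (u p)^2)^2 - 2*(∑ p, u p*v p)^2 + (∑ p, (v p)^2)^2) := by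
  have hfact : ∀ (f : Fin N → ℝ), ∑ p, ∑ q, f p * f q = (∑ p, f p)^2 := by
    intro f
    rw [sq, Finset.sum_mul_sum]
  have h1 := hfact (fun p => (u p)^2)
  have h2 := hfact (fun p => u p * v p)
  have h3 := hfact (fun p => (v p)^2)
  calc ∑ p, ∑ q, (n*(u p*u q) - n*(v p*v q))^2
      = ∑ p, ∑ q, (n^2*((u p)^2*(u q)^2) - 2*n^2*((u p*v p)*(u q*v q))
          + n^2*((v p)^2*(v q)^2)) :=
        Finset.sum_congr rfl fun p _ => Finset.sum_congr rfl fun q _ => by ring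
    _ = ∑ p, ((n^2*∑ q, (u p)^2*(u q)^2) - (2*n^2*∑ q, (u p*v p)*(u q*v q))
          + (n^2*∑ q, (v p)^2*(v q)^2)) := by
        apply Finset.sum_congr rfl
        intro p _
        rw [Finset.sum_add_distrib, Finset.sum_sub_distrib, Finset.mul_sum, Finset.mul_sum,
          Finset.mul_sum]
    _ = (n^2*∑ p, ∑ q, (u p)^2*(u q)^2) - (2*n^2*∑ p, ∑ q, (u p*v p)*(u q*v q))
          + (n^2*∑ p, ∑ q, (v p)^2*(v q)^2) := by
        rw [Finset.sum_add_distrib, Finset.sum_sub_distrib, Finset.mul_sum, Finset.mul_sum,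
          Finset.mul_sum]
    _ = n^2*((∑ p, (u p)^2)^2 - 2*(∑ p, u p*v p)^2 + (∑ p, (v p)^2)^2) := by
        rw [h1, h2, h3]
        ring

set_option maxHeartbeats 3000000 in
/-- let `K` be a real symmetric PSD `N × N` matrix with diagonal entries
at most `1` and eigenvalues `λ₁ ≥ … ≥ λ_N` (eigendecomposition `K = V diag(λ) Vᵀ`).
Sample `j₁,…,j_m` i.i.d. uniformly from `{1,…,N}` (modelled by the uniform distribution
on `Fin m → Fin N`), set `K̂ = K.submatrix j j` and `K_b = K.submatrix id j`.  For every
`δ ∈ (0,1)` and `1 ≤ r ≤ N−1` with `λ_r > 0`, with probability at least `1 − δ`,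
`‖K − K_b K̂† K_bᵀ‖₂ ≤ 16 (ln(2/δ))² N²/(m λ_r) + λ_{r+1}`. -/
theorem stmt7 {N m : ℕ} (hN : 0 < N) (hm : 0 < m)
    (K : Matrix (Fin N) (Fin N) ℝ) (hK : K.PosSemidef) (hdiag : ∀ i, K i i ≤ 1)
    (lam : Fin N → ℝ) (V : Matrix (Fin N) (Fin N) ℝ)
    (hV : Vᵀ * V = 1) (hdecomp : K = V * Matrix.diagonal lam * Vᵀ)
    (hdesc : ∀ i j : Fin N, i ≤ j → lam j ≤ lam i)
    (pinv : (Fin m → Fin N) → Matrix (Fin m) (Fin m) ℝ)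
    (hpinv : ∀ j : Fin m → Fin N, IsMoorePenroseInv (K.submatrix j j) (pinv j))
    (δ : ℝ) (hδ : δ ∈ Set.Ioo (0 : ℝ) 1)
    (r : ℕ) (hr1 : 1 ≤ r) (hrN : r < N)
    (hlamr : 0 < lam ⟨r - 1, by omega⟩) :
    ((Nat.card {j : Fin m → Fin N //
        ‖K - (K.submatrix id j * pinv j * (K.submatrix id j)ᵀ)‖
          ≤ 16 * (Real.log (2 / δ)) ^ 2 * N ^ 2 / (m * lam ⟨r - 1, by omega⟩)
            + lam ⟨r, hrN⟩}) : ℝ)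
      ≥ (1 - δ) * N ^ m := by
  classical
  obtain ⟨hδ0, hδ1⟩ := hδ
  have hNR : (0:ℝ) < N := by exact_mod_cast hN
  have hmR : (0:ℝ) < m := by exact_mod_cast hm
  set L := Real.log (2/δ) with hLdef
  have hL2 : Real.log 2 ≤ L := by
    apply Real.log_le_log (by norm_num)
    rw [le_div_iff₀ hδ0]
    nlinarith
  have hlog2 : (0.6931471803:ℝ) < Real.log 2 := Real.log_two_gt_d9
  have hLpos : 0 < L := by linarith
  set pidx : Fin N := ⟨r - 1, by omega⟩ with hpidx
  set qidx : Fin N := ⟨r, hrN⟩ with hqidx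
  -- eigenvalues nonnegative
  have lam_nonneg : ∀ a, 0 ≤ lam a := by
    intro a
    have hVV : V * Vᵀ = 1 := mul_eq_one_comm.mp hV
    have hD : Vᵀ * K * V = Matrix.diagonal lam := by
      rw [hdecomp]
      calc Vᵀ * (V * Matrix.diagonal lam * Vᵀ) * V
          = (Vᵀ * V) * Matrix.diagonal lam * (Vᵀ * V) := by
            simp only [Matrix.mul_assoc]
        _ = Matrix.diagonal lam := by rw [hV, Matrix.one_mul, Matrix.mul_one]
    have hq : lam a = (fun i => V i a) ⬝ᵥ (K *ᵥ (fun i => V i a)) := by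
      have h1 : (Vᵀ * K * V) a a = lam a := by rw [hD]; simp [Matrix.diagonal_apply_eq]
      rw [← h1]
      simp only [Matrix.mul_apply, Matrix.transpose_apply, dotProduct, Matrix.mulVec,
        Finset.sum_mul, Finset.mul_sum]
      rw [Finset.sum_comm]
      apply Finset.sum_congr rfl
      intro i _
      apply Finset.sum_congr rfl
      intro l _
      ring
    rw [hq]
    have := hK.dotProduct_mulVec_nonneg (fun i => V i a)
    simpa using this
  -- lam at pidx/qidx
  have hlam_q_nonneg : 0 ≤ lam qidx := lam_nonneg _
  have hsplit : ∀ a : Fin N, lam pidx ≤ lam a ∨ lam a ≤ lam qidx := by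
    intro a
    by_cases hcase : (a : ℕ) ≤ r - 1
    · left
      exact hdesc a pidx hcase
    · right
      apply hdesc qidx a
      show r ≤ (a : ℕ)
      omega
  -- the square root matrix
  set X : Matrix (Fin N) (Fin N) ℝ :=
    Matrix.of (fun a i => Real.sqrt (lam a) * V i a) with hX
  have hXapp : ∀ a i, X a i = Real.sqrt (lam a) * V i a := fun a i => rfl
  have hVcol : ∀ a b, (∑ i, V i a * V i b) = if a = b then (1:ℝ) else 0 := by
    intro a b
    have : (Vᵀ * V) a b = (1 : Matrix (Fin N) (Fin N) ℝ) a b := by rw [hV]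
    rw [Matrix.mul_apply] at this
    simp only [Matrix.transpose_apply] at this
    rw [this, Matrix.one_apply]
  have hXXt : X * Xᵀ = Matrix.diagonal lam := by
    ext a b
    rw [Matrix.mul_apply, Matrix.diagonal_apply]
    have : ∀ i, X a i * Xᵀ i b
        = (Real.sqrt (lam a) * Real.sqrt (lam b)) * (V i a * V i b) := by
      intro i
      rw [Matrix.transpose_apply, hXapp, hXapp]
      ring
    rw [Finset.sum_congr rfl fun i _ => this i, ← Finset.mul_sum, hVcol]
    by_cases hab : a = b
    · subst hab
      simp [Real.mul_self_sqrt (lam_nonneg a)]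
    · simp [hab]
  have hXtX : Xᵀ * X = K := by
    ext i l
    rw [Matrix.mul_apply, hdecomp]
    rw [Matrix.mul_apply]
    have h1 : ∀ a, (V * Matrix.diagonal lam) i a * Vᵀ a l = V i a * lam a * V l a := by
      intro a
      rw [Matrix.mul_diagonal, Matrix.transpose_apply]
    rw [Finset.sum_congr rfl fun a _ => h1 a]
    apply Finset.sum_congr rfl
    intro a _
    rw [Matrix.transpose_apply, hXapp, hXapp]
    have h2 := Real.mul_self_sqrt (lam_nonneg a)
    linear_combination (V i a * V l a) * h2
  have hcolnorm : ∀ i, (∑ a, (X a i)^2) = K i i := by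
    intro i
    have : (Xᵀ * X) i i = K i i := by rw [hXtX]
    rw [Matrix.mul_apply] at this
    rw [← this]
    apply Finset.sum_congr rfl
    intro a _
    rw [Matrix.transpose_apply]
    ring
  have hcolnorm_le : ∀ i, (∑ a, (X a i)^2) ≤ 1 := fun i => (hcolnorm i) ▸ hdiag i
  have hcolnorm_nonneg : ∀ i, 0 ≤ (∑ a, (X a i)^2) :=
    fun i => Finset.sum_nonneg fun a _ => sq_nonneg _
  -- the vectors g i
  set e := (WithLp.linearEquiv 2 ℝ ((Fin N × Fin N) → ℝ)) with he
  set Zfun : Fin N → (Fin N × Fin N) → ℝ :=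
    fun i pq => Matrix.diagonal lam pq.1 pq.2 - N * (X pq.1 i * X pq.2 i) with hZfun
  set g : Fin N → EuclideanSpace ℝ (Fin N × Fin N) := fun i => e.symm (Zfun i) with hg
  have hXXt_entry : ∀ p q, (∑ i, X p i * X q i) = Matrix.diagonal lam p q := by
    intro p q
    have : (X * Xᵀ) p q = Matrix.diagonal lam p q := by rw [hXXt]
    rw [Matrix.mul_apply] at this
    rw [← this]
    apply Finset.sum_congr rfl
    intro i _
    rw [Matrix.transpose_apply]
  have hnorm_e : ∀ y : (Fin N × Fin N) → ℝ, ‖e.symm y‖ = Real.sqrt (∑ pq, (y pq)^2) := by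
    intro y
    rw [EuclideanSpace.norm_eq]
    congr 1
    apply Finset.sum_congr rfl
    intro pq _
    rw [he]
    simp [WithLp.linearEquiv, Real.norm_eq_abs, sq_abs]
  have hsum_g : ∑ i, g i = 0 := by
    rw [hg]
    simp only
    rw [← map_sum]
    have hzero : (∑ i, Zfun i) = 0 := by
      funext pq
      rw [Finset.sum_apply]
      rw [hZfun]
      simp only
      rw [Finset.sum_sub_distrib, ← Finset.mul_sum, hXXt_entry pq.1 pq.2]
      simp [Finset.sum_const, Finset.card_univ]
    rw [hzero, map_zero]
  set cc : ℝ := Real.sqrt 2 * N with hcc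
  have hccpos : 0 < cc := by
    rw [hcc]
    have : (0:ℝ) < Real.sqrt 2 := Real.sqrt_pos.mpr (by norm_num)
    positivity
  have hc_bound : ∀ a b : Fin N, ‖g a - g b‖ ≤ cc := by
    intro a b
    rw [hg]
    simp only
    rw [← map_sub, hnorm_e]
    have hsum_eq : (∑ pq : Fin N × Fin N, ((Zfun a - Zfun b) pq)^2)
        = ∑ p, ∑ q, ((N:ℝ)*(X p b*X q b) - (N:ℝ)*(X p a*X q a))^2 := by
      rw [Fintype.sum_prod_type]
      apply Finset.sum_congr rfl; intro p _
      apply Finset.sum_congr rfl; intro q _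
      rw [Pi.sub_apply, hZfun]
      simp only
      ring
    rw [hsum_eq, sum_pair_sq]
    have h1 : 0 ≤ (∑ p, X p b * X p a)^2 := sq_nonneg _
    have h2 : (∑ p, (X p b)^2)^2 ≤ 1 := by
      rw [show (1:ℝ) = 1^2 by norm_num]
      apply pow_le_pow_left₀ (hcolnorm_nonneg b) (hcolnorm_le b)
    have h3 : (∑ p, (X p a)^2)^2 ≤ 1 := by
      rw [show (1:ℝ) = 1^2 by norm_num]
      apply pow_le_pow_left₀ (hcolnorm_nonneg a) (hcolnorm_le a)
    have hbound : (N:ℝ)^2*((∑ p, (X p b)^2)^2 - 2*(∑ p, X p b*X p a)^2 + (∑ p, (X p a)^2)^2)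
        ≤ 2 * (N:ℝ)^2 := by nlinarith
    calc Real.sqrt ((N:ℝ)^2*((∑ p, (X p b)^2)^2 - 2*(∑ p, X p b*X p a)^2 + (∑ p, (X p a)^2)^2))
        ≤ Real.sqrt (2 * (N:ℝ)^2) := Real.sqrt_le_sqrt hbound
      _ = cc := by
          rw [hcc, Real.sqrt_mul (by norm_num), Real.sqrt_sq (le_of_lt hNR)]
  have hsigma : ∑ i, ‖g i‖^2 ≤ (N:ℝ) * (N:ℝ)^2 := by
    have hgn : ∀ i, ‖g i‖^2 = ∑ pq : Fin N × Fin N, (Zfun i pq)^2 := by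
      intro i
      rw [hg]
      simp only
      rw [hnorm_e, Real.sq_sqrt (Finset.sum_nonneg fun pq _ => sq_nonneg _)]
    rw [Finset.sum_congr rfl fun i _ => hgn i]
    rw [Finset.sum_comm]
    have hper : ∀ pq : Fin N × Fin N, ∑ i, (Zfun i pq)^2
        ≤ (N:ℝ)^2 * ∑ i, (X pq.1 i * X pq.2 i)^2 := by
      intro pq
      have hexp : ∀ i, (Zfun i pq)^2 = (Matrix.diagonal lam pq.1 pq.2)^2
          - 2*(N:ℝ)*(Matrix.diagonal lam pq.1 pq.2)*(X pq.1 i * X pq.2 i)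
          + (N:ℝ)^2*(X pq.1 i * X pq.2 i)^2 := by
        intro i
        rw [hZfun]
        simp only
        ring
      rw [Finset.sum_congr rfl fun i _ => hexp i]
      rw [Finset.sum_add_distrib, Finset.sum_sub_distrib, ← Finset.mul_sum, ← Finset.mul_sum]
      rw [hXXt_entry pq.1 pq.2]
      have hC2 : (0:ℝ) ≤ (Matrix.diagonal lam pq.1 pq.2)^2 := sq_nonneg _
      have : ∑ _i : Fin N, (Matrix.diagonal lam pq.1 pq.2)^2
          = (N:ℝ) * (Matrix.diagonal lam pq.1 pq.2)^2 := by
        simp [Finset.sum_const, Finset.card_univ, mul_comm]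
      rw [this]
      nlinarith [hNR]
    calc ∑ pq : Fin N × Fin N, ∑ i, (Zfun i pq)^2
        ≤ ∑ pq : Fin N × Fin N, (N:ℝ)^2 * ∑ i, (X pq.1 i * X pq.2 i)^2 :=
          Finset.sum_le_sum fun pq _ => hper pq
      _ = (N:ℝ)^2 * ∑ i, ∑ pq : Fin N × Fin N, (X pq.1 i * X pq.2 i)^2 := by
          rw [← Finset.mul_sum, Finset.sum_comm]
      _ ≤ (N:ℝ)^2 * ∑ _i : Fin N, (1:ℝ) := by
          apply mul_le_mul_of_nonneg_left ?_ (by positivity)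
          apply Finset.sum_le_sum
          intro i _
          have : ∑ pq : Fin N × Fin N, (X pq.1 i * X pq.2 i)^2
              = (∑ p, (X p i)^2) * (∑ q, (X q i)^2) := by
            rw [Fintype.sum_prod_type, Finset.sum_mul_sum]
            apply Finset.sum_congr rfl; intro p _
            apply Finset.sum_congr rfl; intro q _
            ring
          rw [this]
          nlinarith [hcolnorm_le i, hcolnorm_nonneg i]
      _ = (N:ℝ) * (N:ℝ)^2 := by
          simp only [Finset.sum_const, Finset.card_univ, Fintype.card_fin, nsmul_eq_mul, mul_one]
          ring
  -- concentration
  set ss : ℝ := 2*N*Real.sqrt (L*m) with hss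
  have hsspos : 0 < ss := by
    rw [hss]
    have h0 : (0:ℝ) < Real.sqrt (L*m) := Real.sqrt_pos.mpr (mul_pos hLpos hmR)
    positivity
  have hbadcard := conc_main hN hm g hsum_g cc ((N:ℝ)^2) hccpos hc_bound hsigma
    (by positivity) ss hsspos
  have hexp_eq : Real.exp (-(ss^2/(2 * m * cc^2))) = δ/2 := by
    have h1 : ss^2 = 4*(N:ℝ)^2*(L*m) := by
      rw [hss, mul_pow, mul_pow, Real.sq_sqrt (by positivity)]
      ring
    have h2 : cc^2 = 2*(N:ℝ)^2 := by
      rw [hcc, mul_pow, Real.sq_sqrt (by norm_num)]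
    have h3 : ss^2/(2 * m * cc^2) = L := by
      rw [h1, h2]
      field_simp
      ring
    rw [h3, hLdef, Real.exp_neg, Real.exp_log (div_pos (by norm_num) hδ0)]
    rw [inv_div]
  rw [hexp_eq] at hbadcard
  -- threshold arithmetic
  set T : ℝ := Real.sqrt (m * (N:ℝ)^2) + ss with hT
  have hTpos : 0 < T := by
    rw [hT]
    have : 0 ≤ Real.sqrt (m * (N:ℝ)^2) := Real.sqrt_nonneg _
    linarith
  set u : ℝ := Real.sqrt L with hu
  have husq : u^2 = L := Real.sq_sqrt (le_of_lt hLpos)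
  have hu0 : 0 ≤ u := Real.sqrt_nonneg _
  have hT_eq : T = (N:ℝ) * Real.sqrt m * (1 + 2*u) := by
    rw [hT, hss, hu]
    rw [Real.sqrt_mul (le_of_lt hmR) ((N:ℝ)^2), Real.sqrt_sq (le_of_lt hNR)]
    rw [Real.sqrt_mul (le_of_lt hLpos) (m:ℝ)]
    ring
  have hT2 : T^2 ≤ 16*L^2*(N:ℝ)^2*m := by
    have hgeo : (0.6931471803:ℝ) ≤ u^2 := by rw [husq]; linarith
    have hkey : 1 + 2*u ≤ 4*u^2 := by nlinarith [sq_nonneg (u - 0.8325)]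
    have hpow : (1 + 2*u)^2 ≤ (4*u^2)^2 := by
      apply pow_le_pow_left₀ (by linarith) hkey
    have hmsq : (Real.sqrt m)^2 = (m:ℝ) := Real.sq_sqrt (le_of_lt hmR)
    calc T^2 = (N:ℝ)^2 * (Real.sqrt m)^2 * (1+2*u)^2 := by rw [hT_eq]; ring
      _ ≤ (N:ℝ)^2 * (Real.sqrt m)^2 * (4*u^2)^2 := by
          apply mul_le_mul_of_nonneg_left hpow (by positivity)
      _ = 16*L^2*(N:ℝ)^2*m := by rw [hmsq, show (4*u^2)^2 = 16*(u^2)^2 by ring, husq]; ring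
  -- deterministic bound on the good set
  have hgood : ∀ j : Fin m → Fin N,
      ¬(Real.sqrt (m * (N:ℝ)^2) + ss < ‖∑ k, g (j k)‖) →
      ‖K - K.submatrix id j * pinv j * (K.submatrix id j)ᵀ‖
        ≤ 16*L^2*(N:ℝ)^2/(m*lam pidx) + lam qidx := by
    intro j hj
    push_neg at hj
    rw [← hT] at hj
    set A := X.submatrix id j with hAdef
    set Emat := Matrix.diagonal lam - ((N:ℝ)/m) • (A * Aᵀ) with hEmat
    have hlink : ∑ a, ∑ b, (Emat a b)^2 ≤ T^2/(m:ℝ)^2 := by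
      have hnormsum : ‖∑ k, g (j k)‖
          = Real.sqrt (∑ pq : Fin N × Fin N, ((∑ k, Zfun (j k)) pq)^2) := by
        rw [hg]
        simp only
        rw [← map_sum, hnorm_e]
      have hentry : ∀ pq : Fin N × Fin N, (∑ k, Zfun (j k)) pq = m * Emat pq.1 pq.2 := by
        intro pq
        rw [Finset.sum_apply, hEmat]
        simp only [Matrix.sub_apply, Matrix.smul_apply, smul_eq_mul]
        have hAA : (A * Aᵀ) pq.1 pq.2 = ∑ k, X pq.1 (j k) * X pq.2 (j k) := by
          rw [Matrix.mul_apply]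
          apply Finset.sum_congr rfl
          intro k _
          simp [hAdef, Matrix.submatrix_apply, Matrix.transpose_apply]
        rw [hAA, hZfun]
        simp only
        rw [Finset.sum_sub_distrib, ← Finset.mul_sum]
        rw [Finset.sum_const, card_univ, Fintype.card_fin, nsmul_eq_mul]
        field_simp
      have hsq_eq : ∑ pq : Fin N × Fin N, ((∑ k, Zfun (j k)) pq)^2
          = (m:ℝ)^2 * ∑ a, ∑ b, (Emat a b)^2 := by
        rw [Fintype.sum_prod_type]
        rw [Finset.mul_sum]
        apply Finset.sum_congr rfl
        intro a _
        rw [Finset.mul_sum]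
        apply Finset.sum_congr rfl
        intro b _
        rw [hentry (a, b)]
        ring
      have hS_nonneg : 0 ≤ ∑ pq : Fin N × Fin N, ((∑ k, Zfun (j k)) pq)^2 :=
        Finset.sum_nonneg fun pq _ => sq_nonneg _
      have h5 : ∑ pq : Fin N × Fin N, ((∑ k, Zfun (j k)) pq)^2 ≤ T^2 := by
        have h6 : Real.sqrt (∑ pq : Fin N × Fin N, ((∑ k, Zfun (j k)) pq)^2) ≤ T := by
          rw [← hnormsum]; exact hj
        calc ∑ pq : Fin N × Fin N, ((∑ k, Zfun (j k)) pq)^2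
            = (Real.sqrt (∑ pq : Fin N × Fin N, ((∑ k, Zfun (j k)) pq)^2))^2 :=
              (Real.sq_sqrt hS_nonneg).symm
          _ ≤ T^2 := pow_le_pow_left₀ (Real.sqrt_nonneg _) h6 2
      rw [hsq_eq] at h5
      rw [le_div_iff₀ (by positivity)]
      linarith
    have hmp' : IsMoorePenroseInv (Aᵀ * A) (pinv j) := by
      have hKsub : Aᵀ * A = K.submatrix j j := by
        ext k l
        rw [Matrix.mul_apply, ← hXtX, Matrix.submatrix_apply, Matrix.mul_apply]
        apply Finset.sum_congr rfl
        intro a _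
        simp [hAdef, Matrix.transpose_apply, Matrix.submatrix_apply]
      rw [hKsub]
      exact hpinv j
    have hdb := det_bound hN hm lam lam_nonneg X hXXt j (pinv j) hmp' pidx qidx hlamr
      hlam_q_nonneg hsplit (T^2/(m:ℝ)^2) hlink
    rw [hXtX] at hdb
    refine le_trans hdb ?_
    have harith : T^2/(m:ℝ)^2/lam pidx ≤ 16*L^2*(N:ℝ)^2/(m*lam pidx) := by
      rw [div_div]
      rw [show 16*L^2*(N:ℝ)^2/(m*lam pidx) = (16*L^2*(N:ℝ)^2*m)/((m:ℝ)^2*lam pidx) by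
        field_simp]
      apply div_le_div_of_nonneg_right hT2 ?_
      positivity
    linarith
  -- counting
  have hcard1 : (Nat.card {j : Fin m → Fin N //
      ‖K - (K.submatrix id j * pinv j * (K.submatrix id j)ᵀ)‖
        ≤ 16 * L ^ 2 * (N:ℝ) ^ 2 / (m * lam pidx) + lam qidx} : ℝ)
      = ((Finset.univ.filter (fun j : Fin m → Fin N =>
          ‖K - (K.submatrix id j * pinv j * (K.submatrix id j)ᵀ)‖
            ≤ 16 * L ^ 2 * (N:ℝ) ^ 2 / (m * lam pidx) + lam qidx)).card : ℝ) := by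
    rw [Nat.card_eq_fintype_card, Fintype.card_subtype]
  rw [ge_iff_le]
  rw [hcard1]
  set badP := fun j : Fin m → Fin N =>
    Real.sqrt (m * (N:ℝ)^2) + ss < ‖∑ k, g (j k)‖ with hbadP
  set goodP := fun j : Fin m → Fin N =>
    ‖K - (K.submatrix id j * pinv j * (K.submatrix id j)ᵀ)‖
      ≤ 16 * L ^ 2 * (N:ℝ) ^ 2 / (m * lam pidx) + lam qidx with hgoodP
  have hsubset : Finset.univ.filter (fun j => ¬ badP j) ⊆ Finset.univ.filter goodP := by
    intro j hjmem
    rw [Finset.mem_filter] at hjmem ⊢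
    exact ⟨hjmem.1, hgood j hjmem.2⟩
  have hcards : (Finset.univ.filter badP).card + (Finset.univ.filter (fun j => ¬ badP j)).card
      = N^m := by
    rw [Finset.card_filter_add_card_filter_not]
    simp [Finset.card_univ, Fintype.card_pi, Finset.prod_const]
  have hgoodcard : ((Finset.univ.filter goodP).card : ℝ)
      ≥ (N:ℝ)^m - ((Finset.univ.filter badP).card : ℝ) := by
    have h7 : ((Finset.univ.filter (fun j => ¬ badP j)).card : ℝ)
        ≤ ((Finset.univ.filter goodP).card : ℝ) := by
      exact_mod_cast Finset.card_le_card hsubset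
    have h8 : ((Finset.univ.filter badP).card : ℝ)
        + ((Finset.univ.filter (fun j => ¬ badP j)).card : ℝ) = (N:ℝ)^m := by
      rw [← Nat.cast_add]
      rw [hcards]
      push_cast
      rfl
    linarith
  have hfinal : ((Finset.univ.filter badP).card : ℝ) ≤ (N:ℝ)^m * (δ/2) := hbadcard
  calc (1 - δ) * (N:ℝ)^m ≤ (N:ℝ)^m - (N:ℝ)^m * (δ/2) := by nlinarith [pow_pos hNR m]
    _ ≤ ((Finset.univ.filter goodP).card : ℝ) := by linarith
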